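/- (Intermediate ℓ_q bound in the proof of Theorem 3.2(ii).) Let q ∈ [1, ∞). Under the Dantzig-selector hypotheses, with h := θ₀ − θ̂, S := |T₀|, K₄ := 4/ν and ε := max_{i,j} |(V(θ₀) − J)_{ij}|, one has F_q(T₀; J) · ‖h‖_q ≤ 2 S^{1/q} ( ε ‖h‖₁ + K₄ γ ). -/

import Mathlib

open Finset

/-- ℓ₁ norm on `Fin p → ℝ`. -/
noncomputable def l1 {p : ℕ} (v : Fin p → ℝ) : ℝ := ∑ i, |v i|

/-- ℓ₁ norm of the subvector indexed by `T`. -/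
noncomputable def l1on {p : ℕ} (T : Finset (Fin p)) (v : Fin p → ℝ) : ℝ := ∑ i ∈ T, |v i|

/-- ℓ₂ norm on `Fin p → ℝ`. -/
noncomputable def l2 {p : ℕ} (v : Fin p → ℝ) : ℝ := Real.sqrt (∑ i, (v i) ^ 2)

/-- ℓ_∞ norm on `Fin p → ℝ`. -/
noncomputable def linf {p : ℕ} (v : Fin p → ℝ) : ℝ := ⨆ i, |v i|

/-- ℓ_q norm on `Fin p → ℝ` for real `q ≥ 1`. -/
noncomputable def lqnorm {p : ℕ} (q : ℝ) (v : Fin p → ℝ) : ℝ := (∑ i, |v i| ^ q) ^ (1 / q)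

/-- Quadratic form `hᵀ J h`. -/
noncomputable def quadForm {p : ℕ} (J : Matrix (Fin p) (Fin p) ℝ) (h : Fin p → ℝ) : ℝ :=
  ∑ i, ∑ j, h i * J i j * h j

/-- The cone `C_T = {h : ‖h_{Tᶜ}‖₁ ≤ ‖h_T‖₁}`. -/
def cone {p : ℕ} (T : Finset (Fin p)) : Set (Fin p → ℝ) := {h | l1on Tᶜ h ≤ l1on T h}

/-- Compatibility factor `κ(T; J)`. -/
noncomputable def kappa {p : ℕ} (T : Finset (Fin p)) (J : Matrix (Fin p) (Fin p) ℝ) : ℝ :=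
  sInf {r | ∃ h : Fin p → ℝ, h ≠ 0 ∧ h ∈ cone T ∧
    r = Real.sqrt T.card * Real.sqrt (quadForm J h) / l1on T h}

/-- Restricted eigenvalue `RE(T; J)`. -/
noncomputable def RE {p : ℕ} (T : Finset (Fin p)) (J : Matrix (Fin p) (Fin p) ℝ) : ℝ :=
  sInf {r | ∃ h : Fin p → ℝ, h ≠ 0 ∧ h ∈ cone T ∧
    r = Real.sqrt (quadForm J h) / l2 h}

/-- Weak cone invertibility factor at `q = ∞`, `F_∞(T; J)`. -/
noncomputable def Finf {p : ℕ} (T : Finset (Fin p)) (J : Matrix (Fin p) (Fin p) ℝ) : ℝ :=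
  sInf {r | ∃ h : Fin p → ℝ, h ≠ 0 ∧ h ∈ cone T ∧
    r = Real.sqrt (quadForm J h) / linf h}

/-- Weak cone invertibility factor `F_q(T; J)` for `q ∈ [1,∞)`
(with the quadratic form without square root, as in the paper's proofs). -/
noncomputable def Fq {p : ℕ} (q : ℝ) (T : Finset (Fin p)) (J : Matrix (Fin p) (Fin p) ℝ) : ℝ :=
  sInf {r | ∃ h : Fin p → ℝ, h ≠ 0 ∧ h ∈ cone T ∧
    r = (T.card : ℝ) ^ (1 / q) * quadForm J h / (l1on T h * lqnorm q h)}

/-- `g(x) = (e^{2x} - 1)/x` for `x ≠ 0`, `g(0) = 2`. -/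
noncomputable def g (x : ℝ) : ℝ := if x = 0 then 2 else (Real.exp (2 * x) - 1) / x

/-- Gradient of the log-quasi-likelihood (divided by `n`), with `b = 0`, `Δ = 1/n`:
`ψ(θ)_i = (1/(nΔ)) Σ_k z_{k,i}(e^{-2⟨θ,z_k⟩}(x_k - x_{k-1})² - Δ)`. -/
noncomputable def psiD {n p : ℕ} (x : Fin (n + 1) → ℝ) (z : Fin n → Fin p → ℝ)
    (θ : Fin p → ℝ) (i : Fin p) : ℝ :=
  (1 / ((n : ℝ) * (1 / n))) * ∑ k, z k i *
    (Real.exp (-2 * ∑ j, θ j * z k j) * (x k.succ - x k.castSucc) ^ 2 - 1 / n)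

/-- Negative Hessian (divided by `n`):
`V(θ) = (2/(nΔ)) Σ_k e^{-2⟨θ,z_k⟩}(x_k - x_{k-1})² z_k z_kᵀ`. -/
noncomputable def VD {n p : ℕ} (x : Fin (n + 1) → ℝ) (z : Fin n → Fin p → ℝ)
    (θ : Fin p → ℝ) : Matrix (Fin p) (Fin p) ℝ := fun i j =>
  (2 / ((n : ℝ) * (1 / n))) * ∑ k, Real.exp (-2 * ∑ l, θ l * z k l) *
    (x k.succ - x k.castSucc) ^ 2 * z k i * z k j

/-- `J = (2/n) Σ_k z_k z_kᵀ`. -/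
noncomputable def JD {n p : ℕ} (z : Fin n → Fin p → ℝ) : Matrix (Fin p) (Fin p) ℝ :=
  fun i j => (2 / (n : ℝ)) * ∑ k, z k i * z k j

/-- `ε = max_{i,j} |(V(θ) - J)_{ij}|`. -/
noncomputable def epsD {n p : ℕ} (x : Fin (n + 1) → ℝ) (z : Fin n → Fin p → ℝ)
    (θ : Fin p → ℝ) : ℝ :=
  ⨆ i, ⨆ j, |VD x z θ i j - JD z i j|

section Helpers

open Finset

lemma g_pos (x : ℝ) : 0 < g x := by
  unfold g
  split_ifs with h
  · norm_num
  · rcases lt_or_gt_of_ne h with hx | hx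
    · have h1 : Real.exp (2 * x) < 1 := Real.exp_lt_one_iff.mpr (by linarith)
      exact div_pos_of_neg_of_neg (by linarith) hx
    · have h1 := Real.add_one_le_exp (2 * x)
      exact div_pos (by linarith) hx

lemma quad_general {m p : ℕ} (M : Matrix (Fin p) (Fin p) ℝ) (w : Fin m → ℝ)
    (z : Fin m → Fin p → ℝ) (hM : ∀ i j, M i j = ∑ k, w k * z k i * z k j)
    (h : Fin p → ℝ) : quadForm M h = ∑ k, w k * (∑ i, h i * z k i) ^ 2 := by
  unfold quadForm
  simp only [hM]
  have step1 : ∀ i : Fin p, ∑ j, h i * (∑ k, w k * z k i * z k j) * h j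
      = ∑ k, ∑ j, h i * (w k * z k i * z k j) * h j := by
    intro i
    rw [Finset.sum_comm]
    exact Finset.sum_congr rfl fun j _ => by rw [Finset.mul_sum, Finset.sum_mul]
  simp only [step1]
  rw [Finset.sum_comm]
  refine Finset.sum_congr rfl fun k _ => ?_
  rw [sq, Finset.sum_mul_sum, Finset.mul_sum]
  refine Finset.sum_congr rfl fun i _ => ?_
  rw [Finset.mul_sum]
  exact Finset.sum_congr rfl fun j _ => by ring

lemma quad_sub_le {p : ℕ} (A B : Matrix (Fin p) (Fin p) ℝ) (h : Fin p → ℝ) (ε : ℝ)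
    (hε : ∀ i j, |A i j - B i j| ≤ ε) :
    quadForm A h ≤ quadForm B h + ε * (l1 h) ^ 2 := by
  have key : quadForm A h - quadForm B h ≤ ε * (l1 h) ^ 2 := by
    have e1 : quadForm A h - quadForm B h = ∑ i, ∑ j, h i * (A i j - B i j) * h j := by
      unfold quadForm
      rw [← Finset.sum_sub_distrib]
      refine Finset.sum_congr rfl fun i _ => ?_
      rw [← Finset.sum_sub_distrib]
      exact Finset.sum_congr rfl fun j _ => by ring
    rw [e1]
    have e2 : ∑ i, ∑ j, h i * (A i j - B i j) * h j ≤ ∑ i, ∑ j, |h i| * ε * |h j| := by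
      refine Finset.sum_le_sum fun i _ => Finset.sum_le_sum fun j _ => ?_
      calc h i * (A i j - B i j) * h j ≤ |h i * (A i j - B i j) * h j| := le_abs_self _
        _ = |h i| * |A i j - B i j| * |h j| := by rw [abs_mul, abs_mul]
        _ ≤ |h i| * ε * |h j| :=
            mul_le_mul_of_nonneg_right
              (mul_le_mul_of_nonneg_left (hε i j) (abs_nonneg _)) (abs_nonneg _)
    refine e2.trans_eq ?_
    unfold l1
    rw [sq, Finset.sum_mul_sum, Finset.mul_sum]
    refine Finset.sum_congr rfl fun i _ => ?_
    rw [Finset.mul_sum]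
    exact Finset.sum_congr rfl fun j _ => by ring
  linarith

lemma inner_generic {m p : ℕ} (h : Fin p → ℝ) (z : Fin m → Fin p → ℝ) (a b : Fin m → ℝ)
    (Δ : ℝ) :
    ∑ i, h i * ((∑ k, z k i * (a k - Δ)) - ∑ k, z k i * (b k - Δ))
      = ∑ k, (a k - b k) * ∑ i, h i * z k i := by
  have step : ∀ i, h i * ((∑ k, z k i * (a k - Δ)) - ∑ k, z k i * (b k - Δ))
      = ∑ k, (a k - b k) * (h i * z k i) := by
    intro i
    rw [← Finset.sum_sub_distrib, Finset.mul_sum]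
    exact Finset.sum_congr rfl fun k _ => by ring
  simp only [step]
  rw [Finset.sum_comm]
  exact Finset.sum_congr rfl fun k _ => (Finset.mul_sum _ _ _).symm

lemma per_k_base (ν A B c u : ℝ) (hc : 0 ≤ c) (hu : u = A - B) (hνg : ν ≤ g u) :
    ν * (Real.exp (-2 * A) * c * u ^ 2)
      ≤ (Real.exp (-2 * B) * c - Real.exp (-2 * A) * c) * u := by
  have hB : Real.exp (-2 * B) = Real.exp (-2 * A) * Real.exp (2 * u) := by
    rw [← Real.exp_add]; congr 1; rw [hu]; ring
  rw [hB]
  rcases eq_or_ne u 0 with h0 | h0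
  · simp [h0]
  · have hg : g u = (Real.exp (2 * u) - 1) / u := by unfold g; rw [if_neg h0]
    have e : (Real.exp (-2 * A) * Real.exp (2 * u) * c - Real.exp (-2 * A) * c) * u
        = g u * (Real.exp (-2 * A) * c * u ^ 2) := by
      rw [hg]
      field_simp
    rw [e]
    exact mul_le_mul_of_nonneg_right hνg
      (mul_nonneg (mul_nonneg (Real.exp_pos _).le hc) (sq_nonneg _))

lemma per_k_ineq (ν A B c u : ℝ) (hc : 0 ≤ c) (hu : u = A - B) (hνg : ν ≤ g u) :
    ν * (2 * Real.exp (-2 * A) * c * u ^ 2)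
      ≤ 2 * ((Real.exp (-2 * B) * c - Real.exp (-2 * A) * c) * u) := by
  have base := per_k_base ν A B c u hc hu hνg
  nlinarith [base]

lemma l1_nonneg {p : ℕ} (v : Fin p → ℝ) : 0 ≤ l1 v :=
  Finset.sum_nonneg fun _ _ => abs_nonneg _

lemma l1on_nonneg {p : ℕ} (T : Finset (Fin p)) (v : Fin p → ℝ) : 0 ≤ l1on T v :=
  Finset.sum_nonneg fun _ _ => abs_nonneg _

lemma lqnorm_nonneg {p : ℕ} (q : ℝ) (v : Fin p → ℝ) : 0 ≤ lqnorm q v :=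
  Real.rpow_nonneg (Finset.sum_nonneg fun _ _ => Real.rpow_nonneg (abs_nonneg _) _) _

end Helpers

/-- Intermediate ℓ_q bound in the proof of Theorem 3.2(ii): for `q ∈ [1,∞)`, with
`h := θ₀ - θ̂`, `S := |T₀|`, `K₄ := 4/ν` and `ε := max_{i,j} |(V(θ₀) - J)_{ij}|`,
one has `F_q(T₀;J) ‖h‖_q ≤ 2 S^{1/q} (ε ‖h‖₁ + K₄ γ)`. -/
theorem theorem_3_2_ii_intermediate
    (n p : ℕ) (hn : 0 < n) (hp : 0 < p)
    (C : ℝ) (hC : 0 < C)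
    (x : Fin (n + 1) → ℝ) (z : Fin n → Fin p → ℝ)
    (hz : ∀ k i, |z k i| ≤ C)
    (θ₀ θhat : Fin p → ℝ)
    (ν : ℝ) (hν : IsLeast (g '' Set.Icc (-(2 * C * l1 θ₀)) (2 * C * l1 θ₀)) ν)
    (γ : ℝ) (hγ : 0 < γ)
    (hfeas : linf (psiD x z θhat) ≤ γ)
    (hmin : l1 θhat ≤ l1 θ₀)
    (htrue : linf (psiD x z θ₀) ≤ γ)
    (hθ₀ : θ₀ ≠ 0) (q : ℝ) (hq : 1 ≤ q) :
    Fq q (Finset.univ.filter fun j => θ₀ j ≠ 0) (JD z) * lqnorm q (θ₀ - θhat) ≤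
      2 * ((Finset.univ.filter fun j => θ₀ j ≠ 0).card : ℝ) ^ (1 / q) *
        (epsD x z θ₀ * l1 (θ₀ - θhat) + 4 / ν * γ) := by
  classical
  set T : Finset (Fin p) := Finset.univ.filter fun j => θ₀ j ≠ 0 with hT
  set h : Fin p → ℝ := θ₀ - θhat with hhdef
  have hhi : ∀ i, h i = θ₀ i - θhat i := fun i => rfl
  have hn0 : ((n : ℝ)) ≠ 0 := Nat.cast_ne_zero.mpr hn.ne'
  have hD1 : ((n : ℝ) * (1 / (n : ℝ))) = 1 := mul_one_div_cancel hn0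
  -- ν is positive
  obtain ⟨y, hy, hyν⟩ := hν.1
  have hν0 : 0 < ν := hyν ▸ g_pos y
  have hl1θ0 : 0 ≤ l1 θ₀ := l1_nonneg _
  -- ‖h‖₁ ≤ 2‖θ₀‖₁
  have hl1h2 : l1 h ≤ 2 * l1 θ₀ := by
    have htri : l1 h ≤ l1 θ₀ + l1 θhat := by
      unfold l1
      rw [← Finset.sum_add_distrib]
      refine Finset.sum_le_sum fun i _ => ?_
      rw [hhi]
      exact abs_sub (θ₀ i) (θhat i)
    linarith
  -- coordinatewise ψ bounds
  have hpsib : ∀ θ : Fin p → ℝ, linf (psiD x z θ) ≤ γ → ∀ i, |psiD x z θ i| ≤ γ := by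
    intro θ hθγ i
    refine le_trans ?_ hθγ
    unfold linf
    exact le_ciSup (f := fun i => |psiD x z θ i|)
      (Set.Finite.bddAbove (Set.finite_range _)) i
  -- u_k = A_k - B_k
  have huAB : ∀ k, (∑ i, h i * z k i) = (∑ l, θ₀ l * z k l) - ∑ j, θhat j * z k j := by
    intro k
    rw [← Finset.sum_sub_distrib]
    exact Finset.sum_congr rfl fun i _ => by rw [hhi]; ring
  -- |u_k| ≤ 2C‖θ₀‖₁
  have huI : ∀ k, |∑ i, h i * z k i| ≤ 2 * C * l1 θ₀ := by
    intro k
    calc |∑ i, h i * z k i| ≤ ∑ i, |h i| * C := by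
          refine (Finset.abs_sum_le_sum_abs _ _).trans (Finset.sum_le_sum fun i _ => ?_)
          rw [abs_mul]
          exact mul_le_mul_of_nonneg_left (hz k i) (abs_nonneg _)
      _ = l1 h * C := by rw [← Finset.sum_mul]; rfl
      _ ≤ (2 * l1 θ₀) * C := mul_le_mul_of_nonneg_right hl1h2 hC.le
      _ = 2 * C * l1 θ₀ := by ring
  have hνg : ∀ k, ν ≤ g (∑ i, h i * z k i) := fun k =>
    hν.2 ⟨∑ i, h i * z k i, Set.mem_Icc.mpr (abs_le.mp (huI k)), rfl⟩
  -- quadratic form of V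
  have hVq : quadForm (VD x z θ₀) h = ∑ k,
      (2 * Real.exp (-2 * ∑ l, θ₀ l * z k l) * (x k.succ - x k.castSucc) ^ 2) *
        (∑ i, h i * z k i) ^ 2 := by
    refine quad_general _ _ z (fun i j => ?_) h
    simp only [VD]
    rw [hD1, div_one, Finset.mul_sum]
    exact Finset.sum_congr rfl fun k _ => by ring
  -- quadratic form of J
  have hJq : ∀ h' : Fin p → ℝ, quadForm (JD z) h'
      = ∑ k, (2 / (n : ℝ)) * (∑ i, h' i * z k i) ^ 2 := by
    intro h'
    refine quad_general _ (fun _ => 2 / (n : ℝ)) z (fun i j => ?_) h'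
    simp only [JD]
    rw [Finset.mul_sum]
    exact Finset.sum_congr rfl fun k _ => by ring
  have hJ0 : ∀ h' : Fin p → ℝ, 0 ≤ quadForm (JD z) h' := by
    intro h'
    rw [hJq]
    exact Finset.sum_nonneg fun k _ => mul_nonneg (by positivity) (sq_nonneg _)
  -- inner product with ψ difference
  have hinner : ∑ i, h i * (psiD x z θhat i - psiD x z θ₀ i)
      = ∑ k, ((Real.exp (-2 * ∑ j, θhat j * z k j) * (x k.succ - x k.castSucc) ^ 2)
          - Real.exp (-2 * ∑ j, θ₀ j * z k j) * (x k.succ - x k.castSucc) ^ 2) *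
            ∑ i, h i * z k i := by
    simp only [psiD, hD1, div_one, one_mul]
    exact inner_generic h z _ _ _
  -- ν hᵀVh ≤ 2 hᵀ(ψ(θ̂)-ψ(θ₀))
  have hV4 : ν * quadForm (VD x z θ₀) h
      ≤ 2 * ∑ i, h i * (psiD x z θhat i - psiD x z θ₀ i) := by
    rw [hVq, hinner, Finset.mul_sum, Finset.mul_sum]
    refine Finset.sum_le_sum fun k _ => ?_
    exact per_k_ineq ν (∑ l, θ₀ l * z k l) (∑ j, θhat j * z k j)
      ((x k.succ - x k.castSucc) ^ 2) (∑ i, h i * z k i) (sq_nonneg _) (huAB k) (hνg k)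
  -- hᵀ(ψ(θ̂)-ψ(θ₀)) ≤ 2γ‖h‖₁
  have hinner_le : ∑ i, h i * (psiD x z θhat i - psiD x z θ₀ i) ≤ l1 h * (2 * γ) := by
    calc ∑ i, h i * (psiD x z θhat i - psiD x z θ₀ i) ≤ ∑ i, |h i| * (2 * γ) := by
          refine Finset.sum_le_sum fun i _ => ?_
          have h1 := hpsib θhat hfeas i
          have h2 := hpsib θ₀ htrue i
          calc h i * (psiD x z θhat i - psiD x z θ₀ i)
              ≤ |h i * (psiD x z θhat i - psiD x z θ₀ i)| := le_abs_self _
            _ = |h i| * |psiD x z θhat i - psiD x z θ₀ i| := abs_mul _ _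
            _ ≤ |h i| * (2 * γ) := by
                refine mul_le_mul_of_nonneg_left ?_ (abs_nonneg _)
                calc |psiD x z θhat i - psiD x z θ₀ i|
                    ≤ |psiD x z θhat i| + |psiD x z θ₀ i| := abs_sub _ _
                  _ ≤ 2 * γ := by linarith
      _ = l1 h * (2 * γ) := by rw [← Finset.sum_mul]; rfl
  -- V bound
  have hVbound : quadForm (VD x z θ₀) h ≤ 4 / ν * γ * l1 h := by
    have h2 : ν * quadForm (VD x z θ₀) h ≤ 4 * γ * l1 h := by linarith
    rw [show (4 / ν * γ * l1 h) = (4 * γ * l1 h) / ν by ring, le_div_iff₀ hν0]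
    linarith
  -- ε bound
  have hεb : ∀ i j, |VD x z θ₀ i j - JD z i j| ≤ epsD x z θ₀ := by
    intro i j
    unfold epsD
    exact le_trans
      (le_ciSup (f := fun j' => |VD x z θ₀ i j' - JD z i j'|)
        (Set.Finite.bddAbove (Set.finite_range _)) j)
      (le_ciSup (f := fun i' => ⨆ j', |VD x z θ₀ i' j' - JD z i' j'|)
        (Set.Finite.bddAbove (Set.finite_range _)) i)
  have hε0 : 0 ≤ epsD x z θ₀ := (abs_nonneg _).trans (hεb ⟨0, hp⟩ ⟨0, hp⟩)
  have hquadJle : quadForm (JD z) h ≤ quadForm (VD x z θ₀) h + epsD x z θ₀ * (l1 h) ^ 2 :=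
    quad_sub_le _ _ h _ (fun i j => by rw [abs_sub_comm]; exact hεb i j)
  have hfac : 0 ≤ epsD x z θ₀ * l1 h + 4 / ν * γ :=
    add_nonneg (mul_nonneg hε0 (l1_nonneg h))
      (le_of_lt (mul_pos (div_pos (by norm_num) hν0) hγ))
  -- support / cone facts
  have hTc : ∀ i, i ∉ T → θ₀ i = 0 := by
    intro i hi
    by_contra hne
    exact hi (Finset.mem_filter.mpr ⟨Finset.mem_univ i, hne⟩)
  have hθ₀T : l1 θ₀ = l1on T θ₀ := by
    unfold l1 l1on
    refine (Finset.sum_subset (Finset.subset_univ T) fun i _ hi => ?_).symm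
    rw [hTc i hi, abs_zero]
  have hsplit : ∀ v : Fin p → ℝ, l1 v = l1on T v + l1on Tᶜ v :=
    fun v => (Finset.sum_add_sum_compl T _).symm
  have hcone : l1on Tᶜ h ≤ l1on T h := by
    have e1 : l1on Tᶜ h = l1on Tᶜ θhat :=
      Finset.sum_congr rfl fun i hi => by
        rw [hhi, hTc i (Finset.mem_compl.mp hi), zero_sub, abs_neg]
    have e2 : l1on T θ₀ - l1on T θhat ≤ l1on T h := by
      unfold l1on
      rw [← Finset.sum_sub_distrib]
      refine Finset.sum_le_sum fun i _ => ?_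
      rw [hhi]
      exact abs_sub_abs_le_abs_sub _ _
    have e3 := hsplit θhat
    linarith [hθ₀T ▸ hmin]
  have hconemem : h ∈ cone T := hcone
  -- main case split
  by_cases hh0 : h = 0
  · have hq0 : q ≠ 0 := by positivity
    have hL0 : lqnorm q h = 0 := by
      rw [hh0]
      unfold lqnorm
      simp [Real.zero_rpow hq0, Real.zero_rpow (inv_ne_zero hq0),
        Real.zero_rpow (one_div_ne_zero hq0)]
    rw [hL0, mul_zero]
    refine mul_nonneg (mul_nonneg (by norm_num) (Real.rpow_nonneg (Nat.cast_nonneg _) _)) ?_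
    exact add_nonneg (mul_nonneg hε0 (l1_nonneg h))
      (le_of_lt (mul_pos (div_pos (by norm_num) hν0) hγ))
  · -- h ≠ 0
    have hl1onpos : 0 < l1on T h := by
      rcases (l1on_nonneg T h).lt_or_eq with hlt | heq
      · exact hlt
      · exfalso
        apply hh0
        have hTz : ∀ i ∈ T, h i = 0 := fun i hi => abs_eq_zero.mp
          ((Finset.sum_eq_zero_iff_of_nonneg fun j _ => abs_nonneg (h j)).mp heq.symm i hi)
        have hTcz : ∀ i ∈ Tᶜ, h i = 0 := by
          have : l1on Tᶜ h = 0 := le_antisymm (by rw [← heq] at hcone; exact hcone)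
            (l1on_nonneg _ _)
          exact fun i hi => abs_eq_zero.mp
            ((Finset.sum_eq_zero_iff_of_nonneg fun j _ => abs_nonneg (h j)).mp this i hi)
        funext i
        by_cases hi : i ∈ T
        · exact hTz i hi
        · exact hTcz i (Finset.mem_compl.mpr hi)
    have hLpos : 0 < lqnorm q h := by
      obtain ⟨i, hi⟩ : ∃ i, h i ≠ 0 := by
        by_contra hcon
        push_neg at hcon
        exact hh0 (funext hcon)
      unfold lqnorm
      apply Real.rpow_pos_of_pos
      refine Finset.sum_pos' (fun j _ => Real.rpow_nonneg (abs_nonneg _) _)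
        ⟨i, Finset.mem_univ i, Real.rpow_pos_of_pos (abs_pos.mpr hi) q⟩
    -- key inequality
    have hcone2 : l1 h ≤ 2 * l1on T h := by
      have := hsplit h
      linarith
    have hstep : 0 ≤ (epsD x z θ₀ * l1 h + 4 / ν * γ) * (2 * l1on T h - l1 h) :=
      mul_nonneg hfac (by linarith)
    have hkey : quadForm (JD z) h ≤ 2 * (epsD x z θ₀ * l1 h + 4 / ν * γ) * l1on T h := by
      nlinarith [hquadJle, hVbound, hstep, l1_nonneg h]
    -- Fq is at most the value at h
    have hbdd : BddBelow {r | ∃ h' : Fin p → ℝ, h' ≠ 0 ∧ h' ∈ cone T ∧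
        r = (T.card : ℝ) ^ (1 / q) * quadForm (JD z) h' / (l1on T h' * lqnorm q h')} := by
      refine ⟨0, fun r hr => ?_⟩
      obtain ⟨h', _, _, rfl⟩ := hr
      exact div_nonneg (mul_nonneg (Real.rpow_nonneg (Nat.cast_nonneg _) _) (hJ0 h'))
        (mul_nonneg (l1on_nonneg _ _) (lqnorm_nonneg _ _))
    have hFq : Fq q T (JD z)
        ≤ (T.card : ℝ) ^ (1 / q) * quadForm (JD z) h / (l1on T h * lqnorm q h) := by
      unfold Fq
      exact csInf_le hbdd ⟨h, hh0, hconemem, rfl⟩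
    calc Fq q T (JD z) * lqnorm q h
        ≤ ((T.card : ℝ) ^ (1 / q) * quadForm (JD z) h / (l1on T h * lqnorm q h))
            * lqnorm q h := mul_le_mul_of_nonneg_right hFq (lqnorm_nonneg _ _)
      _ = (T.card : ℝ) ^ (1 / q) * (quadForm (JD z) h / l1on T h) := by
          field_simp
      _ ≤ (T.card : ℝ) ^ (1 / q) * (2 * (epsD x z θ₀ * l1 h + 4 / ν * γ)) := by
          refine mul_le_mul_of_nonneg_left ?_ (Real.rpow_nonneg (Nat.cast_nonneg _) _)
          rw [div_le_iff₀ hl1onpos]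
          exact hkey
      _ = 2 * (T.card : ℝ) ^ (1 / q) * (epsD x z θ₀ * l1 h + 4 / ν * γ) := by ring
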